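/- The entanglement of assistance satisfies the upper bound E_a(ρ_{AB})² ≤ 2(1 − Tr ρ_A²), where ρ_A = Tr_B ρ_{AB}. -/

import Mathlib

open scoped BigOperators Matrix ComplexOrder ComplexConjugate

noncomputable section

/-- The rank-one projector `|φ⟩⟨φ|` associated with a vector `φ`. -/
def projM {α : Type*} [Fintype α] (φ : α → ℂ) : Matrix α α ℂ :=
  fun x y => φ x * conj (φ y)

/-- Partial trace over the second tensor factor. -/
def trB {A B : Type*} [Fintype A] [Fintype B]
    (ρ : Matrix (A × B) (A × B) ℂ) : Matrix A A ℂ :=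
  fun i j => ∑ k, ρ (i, k) (j, k)

/-- The purity `Tr(ρ²)` of a state. -/
def purity {A : Type*} [Fintype A] (ρ : Matrix A A ℂ) : ℝ :=
  ((ρ * ρ).trace).re

/-- The squared I-concurrence of a bipartite pure state `φ`:
`C(φ)² = 2 (1 − Tr ρ_A²)`. -/
def Csq {A B : Type*} [Fintype A] [Fintype B] (φ : A × B → ℂ) : ℝ :=
  2 * (1 - purity (trB (projM φ)))

/-- The I-concurrence of a bipartite pure state. -/
def Iconc {A B : Type*} [Fintype A] [Fintype B] (φ : A × B → ℂ) : ℝ :=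
  Real.sqrt (Csq φ)

/-- `p, φ` is a pure-state decomposition of `ρ`: the weights are nonnegative,
the vectors are normalized, and `ρ = ∑ i, p i • |φ i⟩⟨φ i|`. -/
def IsDecomp {A B : Type*} [Fintype A] [Fintype B]
    (ρ : Matrix (A × B) (A × B) ℂ) {m : ℕ}
    (p : Fin m → ℝ) (φ : Fin m → A × B → ℂ) : Prop :=
  (∀ i, 0 ≤ p i) ∧ (∀ i, (∑ x, ‖φ i x‖ ^ 2) = 1) ∧
    ρ = ∑ i, (p i : ℂ) • projM (φ i)

/-- The entanglement of assistance of a bipartite state, defined with the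
I-concurrence: the supremum of the average concurrence over all pure-state
decompositions. -/
def Ea {A B : Type*} [Fintype A] [Fintype B]
    (ρ : Matrix (A × B) (A × B) ℂ) : ℝ :=
  sSup {v | ∃ (m : ℕ) (p : Fin m → ℝ) (φ : Fin m → A × B → ℂ),
    IsDecomp ρ p φ ∧ v = ∑ i, p i * Iconc (φ i)}

/-- The tangle of assistance of a bipartite state: the supremum of the average
squared I-concurrence over all pure-state decompositions. -/
def tauA {A B : Type*} [Fintype A] [Fintype B]
    (ρ : Matrix (A × B) (A × B) ℂ) : ℝ :=
  sSup {v | ∃ (m : ℕ) (p : Fin m → ℝ) (φ : Fin m → A × B → ℂ),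
    IsDecomp ρ p φ ∧ v = ∑ i, p i * Csq (φ i)}


lemma mul_conj_self (z : ℂ) : z * conj z = ((‖z‖ : ℝ) : ℂ) ^ 2 := by
  rw [Complex.mul_conj]
  norm_cast
  rw [Complex.normSq_eq_norm_sq]

-- Cauchy-Schwarz for complex finite sums
lemma cs_complex {ι : Type*} [Fintype ι] (u v : ι → ℂ) :
    ‖∑ i, conj (u i) * v i‖ ^ 2 ≤ (∑ i, ‖u i‖ ^ 2) * (∑ i, ‖v i‖ ^ 2) := by
  let U : EuclideanSpace ℂ ι := WithLp.toLp 2 u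
  let V : EuclideanSpace ℂ ι := WithLp.toLp 2 v
  have h1 : (inner ℂ U V : ℂ) = ∑ i, conj (u i) * v i := by
    simp [U, V, PiLp.inner_apply, RCLike.inner_apply]
    exact Finset.sum_congr rfl fun i _ => mul_comm _ _
  have h2 : ‖(inner ℂ U V : ℂ)‖ ≤ ‖U‖ * ‖V‖ := norm_inner_le_norm U V
  have hU : ‖U‖ ^ 2 = ∑ i, ‖u i‖ ^ 2 := by
    rw [EuclideanSpace.norm_eq, Real.sq_sqrt (by positivity)]
  have hV : ‖V‖ ^ 2 = ∑ i, ‖v i‖ ^ 2 := by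
    rw [EuclideanSpace.norm_eq, Real.sq_sqrt (by positivity)]
  calc ‖∑ i, conj (u i) * v i‖ ^ 2 = ‖(inner ℂ U V : ℂ)‖ ^ 2 := by rw [h1]
    _ ≤ (‖U‖ * ‖V‖) ^ 2 := by
        apply pow_le_pow_left₀ (norm_nonneg _) h2
    _ = (∑ i, ‖u i‖ ^ 2) * (∑ i, ‖v i‖ ^ 2) := by rw [mul_pow, hU, hV]

lemma gram_bound {ι A : Type*} [Fintype ι] [Fintype A] (w : A → ι → ℂ) :
    ∑ a : A, ∑ b : A, ‖∑ k, conj (w a k) * w b k‖ ^ 2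
      ≤ (∑ a : A, ∑ k, ‖w a k‖ ^ 2) ^ 2 := by
  calc ∑ a : A, ∑ b : A, ‖∑ k, conj (w a k) * w b k‖ ^ 2
      ≤ ∑ a : A, ∑ b : A, (∑ k, ‖w a k‖ ^ 2) * (∑ k, ‖w b k‖ ^ 2) := by
        apply Finset.sum_le_sum; intro a _
        apply Finset.sum_le_sum; intro b _
        exact cs_complex _ _
    _ = (∑ a : A, ∑ k, ‖w a k‖ ^ 2) ^ 2 := by
        rw [sq, Finset.sum_mul_sum]

lemma purity_eq {A : Type*} [Fintype A] {M : Matrix A A ℂ} (hM : M.IsHermitian) :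
    purity M = ∑ a, ∑ b, ‖M a b‖ ^ 2 := by
  have key : (M * M).trace = ((∑ a, ∑ b, ‖M a b‖ ^ 2 : ℝ) : ℂ) := by
    rw [Matrix.trace]
    push_cast
    apply Finset.sum_congr rfl
    intro a _
    rw [Matrix.diag_apply, Matrix.mul_apply]
    apply Finset.sum_congr rfl
    intro b _
    rw [← hM.apply b a, show star (M a b) = conj (M a b) from rfl, mul_conj_self]
  unfold purity
  rw [key, Complex.ofReal_re]


lemma projM_isHermitian {α : Type*} [Fintype α] (φ : α → ℂ) : (projM φ).IsHermitian := by
  apply Matrix.IsHermitian.ext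
  intro i j
  simp [projM, mul_comm]

lemma trB_isHermitian {A B : Type*} [Fintype A] [Fintype B] {ρ : Matrix (A × B) (A × B) ℂ}
    (h : ρ.IsHermitian) : (trB ρ).IsHermitian := by
  apply Matrix.IsHermitian.ext
  intro i j
  simp only [trB, star_sum]
  exact Finset.sum_congr rfl fun k _ => h.apply _ _

lemma trace_projM {α : Type*} [Fintype α] (φ : α → ℂ) :
    (projM φ).trace = ((∑ x, ‖φ x‖ ^ 2 : ℝ) : ℂ) := by
  rw [Matrix.trace]
  push_cast
  apply Finset.sum_congr rfl
  intro x _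
  exact mul_conj_self (φ x)

lemma real_convex {m : ℕ} (p x : Fin m → ℝ) (hp : ∀ i, 0 ≤ p i) (hs : ∑ i, p i = 1) :
    (∑ i, p i * x i) ^ 2 ≤ ∑ i, p i * x i ^ 2 := by
  have h := Finset.sum_mul_sq_le_sq_mul_sq Finset.univ (fun i => Real.sqrt (p i))
    (fun i => Real.sqrt (p i) * x i)
  have e1 : ∀ i ∈ Finset.univ, Real.sqrt (p i) * (Real.sqrt (p i) * x i) = p i * x i := by
    intro i _; rw [← mul_assoc, Real.mul_self_sqrt (hp i)]
  have e2 : ∀ i ∈ Finset.univ, Real.sqrt (p i) ^ 2 = p i := fun i _ => Real.sq_sqrt (hp i)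
  have e3 : ∀ i ∈ Finset.univ, (Real.sqrt (p i) * x i) ^ 2 = p i * x i ^ 2 := by
    intro i _; rw [mul_pow, Real.sq_sqrt (hp i)]
  rw [Finset.sum_congr rfl e1, Finset.sum_congr rfl e2, Finset.sum_congr rfl e3, hs,
    one_mul] at h
  exact h

lemma entry_convex {m : ℕ} (p : Fin m → ℝ) (hp : ∀ i, 0 ≤ p i) (hs : ∑ i, p i = 1)
    (z : Fin m → ℂ) : ‖∑ i, (p i : ℂ) * z i‖ ^ 2 ≤ ∑ i, p i * ‖z i‖ ^ 2 := by
  have h1 : ‖∑ i, (p i : ℂ) * z i‖ ≤ ∑ i, p i * ‖z i‖ := by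
    refine (norm_sum_le _ _).trans_eq ?_
    apply Finset.sum_congr rfl
    intro i _
    rw [norm_mul, Complex.norm_real, Real.norm_eq_abs, abs_of_nonneg (hp i)]
  calc ‖∑ i, (p i : ℂ) * z i‖ ^ 2 ≤ (∑ i, p i * ‖z i‖) ^ 2 :=
        pow_le_pow_left₀ (norm_nonneg _) h1 2
    _ ≤ ∑ i, p i * ‖z i‖ ^ 2 := real_convex p (fun i => ‖z i‖) hp hs

lemma purity_trB_projM_le {A B : Type*} [Fintype A] [Fintype B] (φ : A × B → ℂ)
    (h : ∑ x, ‖φ x‖ ^ 2 = 1) : purity (trB (projM φ)) ≤ 1 := by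
  rw [purity_eq (trB_isHermitian (projM_isHermitian φ))]
  set w : A → B → ℂ := fun a k => conj (φ (a, k)) with hw
  have key : ∀ a b, trB (projM φ) a b = ∑ k, conj (w a k) * w b k := by
    intro a b
    apply Finset.sum_congr rfl
    intro k _
    simp [hw, projM]
  have hwt : (∑ a, ∑ k, ‖w a k‖ ^ 2) = 1 := by
    rw [← h, Fintype.sum_prod_type]
    apply Finset.sum_congr rfl
    intro a _
    apply Finset.sum_congr rfl
    intro k _
    simp [hw]
  calc ∑ a, ∑ b, ‖trB (projM φ) a b‖ ^ 2
      = ∑ a, ∑ b, ‖∑ k, conj (w a k) * w b k‖ ^ 2 := by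
        apply Finset.sum_congr rfl; intro a _; apply Finset.sum_congr rfl; intro b _
        rw [key]
    _ ≤ (∑ a, ∑ k, ‖w a k‖ ^ 2) ^ 2 := gram_bound w
    _ = 1 := by rw [hwt]; norm_num

lemma Csq_nonneg {A B : Type*} [Fintype A] [Fintype B] (φ : A × B → ℂ)
    (h : ∑ x, ‖φ x‖ ^ 2 = 1) : 0 ≤ Csq φ := by
  have := purity_trB_projM_le φ h
  unfold Csq
  linarith

lemma purity_trB_le_one {d₁ d₂ : ℕ} (ρ : Matrix (Fin d₁ × Fin d₂) (Fin d₁ × Fin d₂) ℂ)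
    (hρ : ρ.PosSemidef) (htr : ρ.trace = 1) : purity (trB ρ) ≤ 1 := by
  have hH := hρ.1
  obtain ⟨B, rfl⟩ : ∃ B : Matrix (Fin d₁ × Fin d₂) (Fin d₁ × Fin d₂) ℂ, ρ = Bᴴ * B := by
    open scoped MatrixOrder in
    obtain ⟨X, hX, -, hXX⟩ := CFC.exists_sqrt_of_isSelfAdjoint_of_quasispectrumRestricts
      hρ.isHermitian (QuasispectrumRestricts.nnreal_of_nonneg hρ.nonneg)
    exact ⟨X, by rw [← hXX, show Xᴴ = X from hX.star_eq]⟩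
  rw [purity_eq (trB_isHermitian hH)]
  set w : Fin d₁ → ((Fin d₁ × Fin d₂) × Fin d₂) → ℂ := fun a jk => B jk.1 (a, jk.2) with hw
  have key : ∀ a b, trB (Bᴴ * B) a b = ∑ jk, conj (w a jk) * w b jk := by
    intro a b
    rw [Fintype.sum_prod_type]
    rw [Finset.sum_comm]
    apply Finset.sum_congr rfl
    intro k _
    rw [Matrix.mul_apply]
    apply Finset.sum_congr rfl
    intro j _
    simp [hw, Matrix.conjTranspose_apply]
  have htrace : ((∑ x : Fin d₁ × Fin d₂, ∑ j, ‖B j x‖ ^ 2 : ℝ) : ℂ) = 1 := by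
    rw [← htr, Matrix.trace]
    push_cast
    apply Finset.sum_congr rfl
    intro x _
    rw [Matrix.diag_apply, Matrix.mul_apply]
    apply Finset.sum_congr rfl
    intro j _
    rw [Matrix.conjTranspose_apply, show star (B j x) = conj (B j x) from rfl, mul_comm,
      mul_conj_self]
  have hwt : (∑ a, ∑ jk, ‖w a jk‖ ^ 2) = 1 := by
    have h1 : (∑ x : Fin d₁ × Fin d₂, ∑ j, ‖B j x‖ ^ 2 : ℝ) = 1 := by
      exact_mod_cast htrace
    have e1 : ∀ a : Fin d₁, (∑ jk : (Fin d₁ × Fin d₂) × Fin d₂, ‖w a jk‖ ^ 2)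
        = ∑ j : Fin d₁ × Fin d₂, ∑ k, ‖B j (a, k)‖ ^ 2 := by
      intro a
      rw [Fintype.sum_prod_type]
    calc (∑ a, ∑ jk : (Fin d₁ × Fin d₂) × Fin d₂, ‖w a jk‖ ^ 2)
        = ∑ a, ∑ j : Fin d₁ × Fin d₂, ∑ k, ‖B j (a, k)‖ ^ 2 :=
          Finset.sum_congr rfl fun a _ => e1 a
      _ = ∑ j : Fin d₁ × Fin d₂, ∑ a, ∑ k, ‖B j (a, k)‖ ^ 2 := Finset.sum_comm
      _ = ∑ j : Fin d₁ × Fin d₂, ∑ x : Fin d₁ × Fin d₂, ‖B j x‖ ^ 2 := by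
          apply Finset.sum_congr rfl
          intro j _
          rw [Fintype.sum_prod_type]
      _ = ∑ x : Fin d₁ × Fin d₂, ∑ j, ‖B j x‖ ^ 2 := Finset.sum_comm
      _ = 1 := h1
  calc ∑ a, ∑ b, ‖trB (Bᴴ * B) a b‖ ^ 2
      = ∑ a, ∑ b, ‖∑ jk, conj (w a jk) * w b jk‖ ^ 2 := by
        apply Finset.sum_congr rfl; intro a _; apply Finset.sum_congr rfl; intro b _
        rw [key]
    _ ≤ (∑ a, ∑ jk, ‖w a jk‖ ^ 2) ^ 2 := gram_bound w
    _ = 1 := by rw [hwt]; norm_num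


lemma decomp_bound {d₁ d₂ m : ℕ} {ρ : Matrix (Fin d₁ × Fin d₂) (Fin d₁ × Fin d₂) ℂ}
    (hH : ρ.IsHermitian) (htr : ρ.trace = 1)
    {p : Fin m → ℝ} {φ : Fin m → Fin d₁ × Fin d₂ → ℂ} (hd : IsDecomp ρ p φ) :
    (∑ i, p i * Iconc (φ i)) ^ 2 ≤ 2 * (1 - purity (trB ρ)) := by
  obtain ⟨hp, hnorm, hsum⟩ := hd
  have hps : ∑ i, p i = 1 := by
    have h1 : ρ.trace = ((∑ i, p i : ℝ) : ℂ) := by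
      rw [hsum, Matrix.trace_sum]
      push_cast
      apply Finset.sum_congr rfl
      intro i _
      rw [Matrix.trace_smul, trace_projM, hnorm i]
      simp
    rw [htr] at h1
    exact_mod_cast h1.symm
  have step1 : (∑ i, p i * Iconc (φ i)) ^ 2 ≤ ∑ i, p i * Csq (φ i) := by
    refine (real_convex p (fun i => Iconc (φ i)) hp hps).trans_eq ?_
    apply Finset.sum_congr rfl
    intro i _
    rw [Iconc, Real.sq_sqrt (Csq_nonneg (φ i) (hnorm i))]
  have hmix : ∀ a b, trB ρ a b = ∑ i, (p i : ℂ) * (trB (projM (φ i)) a b) := by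
    intro a b
    simp only [trB, hsum, Matrix.sum_apply, Matrix.smul_apply, smul_eq_mul]
    rw [Finset.sum_comm]
    apply Finset.sum_congr rfl
    intro i _
    rw [Finset.mul_sum]
  have step2 : purity (trB ρ) ≤ ∑ i, p i * purity (trB (projM (φ i))) := by
    rw [purity_eq (trB_isHermitian hH)]
    calc ∑ a, ∑ b, ‖trB ρ a b‖ ^ 2
        ≤ ∑ a, ∑ b, ∑ i, p i * ‖trB (projM (φ i)) a b‖ ^ 2 := by
          apply Finset.sum_le_sum; intro a _
          apply Finset.sum_le_sum; intro b _
          rw [hmix a b]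
          exact entry_convex p hp hps _
      _ = ∑ a, ∑ i, ∑ b, p i * ‖trB (projM (φ i)) a b‖ ^ 2 :=
          Finset.sum_congr rfl fun a _ => Finset.sum_comm
      _ = ∑ i, ∑ a, ∑ b, p i * ‖trB (projM (φ i)) a b‖ ^ 2 := Finset.sum_comm
      _ = ∑ i, p i * purity (trB (projM (φ i))) := by
          apply Finset.sum_congr rfl
          intro i _
          rw [purity_eq (trB_isHermitian (projM_isHermitian (φ i)))]
          rw [Finset.mul_sum]
          apply Finset.sum_congr rfl
          intro a _
          rw [Finset.mul_sum]
  have step3 : ∑ i, p i * Csq (φ i)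
      = 2 * ∑ i, p i - 2 * ∑ i, p i * purity (trB (projM (φ i))) := by
    rw [Finset.mul_sum, Finset.mul_sum, ← Finset.sum_sub_distrib]
    apply Finset.sum_congr rfl
    intro i _
    unfold Csq
    ring
  rw [step3, hps] at step1
  linarith

/-- Upper bound for the entanglement of assistance:
`E_a(ρ_{AB})² ≤ 2 (1 − Tr ρ_A²)` where `ρ_A = Tr_B ρ_{AB}`. -/
theorem Ea_sq_le {d₁ d₂ : ℕ} (ρ : Matrix (Fin d₁ × Fin d₂) (Fin d₁ × Fin d₂) ℂ)
    (hρ : ρ.PosSemidef) (htr : ρ.trace = 1) :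
    Ea ρ ^ 2 ≤ 2 * (1 - purity (trB ρ)) := by
  have hR0 : 0 ≤ 2 * (1 - purity (trB ρ)) := by
    have := purity_trB_le_one ρ hρ htr
    linarith
  have hub : Ea ρ ≤ Real.sqrt (2 * (1 - purity (trB ρ))) := by
    apply Real.sSup_le _ (Real.sqrt_nonneg _)
    rintro v ⟨m, p, φ, hd, rfl⟩
    have h1 := decomp_bound hρ.1 htr hd
    have h2 : 0 ≤ ∑ i, p i * Iconc (φ i) :=
      Finset.sum_nonneg fun i _ => mul_nonneg (hd.1 i) (Real.sqrt_nonneg _)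
    calc ∑ i, p i * Iconc (φ i)
        = Real.sqrt ((∑ i, p i * Iconc (φ i)) ^ 2) := (Real.sqrt_sq h2).symm
      _ ≤ Real.sqrt (2 * (1 - purity (trB ρ))) := Real.sqrt_le_sqrt h1
  have hnn : 0 ≤ Ea ρ := by
    apply Real.sSup_nonneg
    rintro v ⟨m, p, φ, hd, rfl⟩
    exact Finset.sum_nonneg fun i _ => mul_nonneg (hd.1 i) (Real.sqrt_nonneg _)
  calc Ea ρ ^ 2 ≤ Real.sqrt (2 * (1 - purity (trB ρ))) ^ 2 := pow_le_pow_left₀ hnn hub 2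
    _ = 2 * (1 - purity (trB ρ)) := Real.sq_sqrt hR0
end
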